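/- Let V be a nonzero finite-dimensional complex irreducible module over sl(2,ℂ) with dim V ≠ 3 (i.e. V is not the adjoint representation D₂). Then every totally symmetric trilinear map μ : V × V × V → sl(2,ℂ) which is equivariant (J3: ⁅x, μ(y₁,y₂,y₃)⁆ = μ(x·y₁,y₂,y₃) + μ(y₁,x·y₂,y₃) + μ(y₁,y₂,x·y₃) for all x ∈ sl(2,ℂ), yᵢ ∈ V) and satisfies the identity J4 (μ(y₂,y₃,y₄)·y₁ + μ(y₁,y₃,y₄)·y₂ + μ(y₁,y₂,y₄)·y₃ + μ(y₁,y₂,y₃)·y₄ = 0 for all y₁,…,y₄ ∈ V) is identically zero. (This is the nonexistence part of Theorem 3.1 for g₁ irreducible: only g₁ ≅ D₂ admits a nontrivial structure.) -/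

import Mathlib

/-- The Lie algebra `sl(2,ℂ)` of traceless `2×2` complex matrices. -/
abbrev sl2C : Type := ↥(LieAlgebra.SpecialLinear.sl (Fin 2) ℂ)

lemma mem_sl2 (A : Matrix (Fin 2) (Fin 2) ℂ) (h : A 0 0 + A 1 1 = 0) :
    A ∈ LieAlgebra.SpecialLinear.sl (Fin 2) ℂ := by
  show A ∈ LinearMap.ker (Matrix.traceLinearMap (Fin 2) ℂ ℂ)
  rw [LinearMap.mem_ker]
  simpa [Matrix.trace_fin_two] using h

def sH : sl2C := ⟨!![1,0;0,-1], mem_sl2 _ (by norm_num)⟩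
def sE : sl2C := ⟨!![0,1;0,0], mem_sl2 _ (by norm_num)⟩
def sF : sl2C := ⟨!![0,0;1,0], mem_sl2 _ (by norm_num)⟩

lemma sl2_trace (X : sl2C) : X.val 0 0 + X.val 1 1 = 0 := by
  have h : Matrix.trace X.val = 0 := X.2
  simpa [Matrix.trace_fin_two] using h

lemma sl2_ext (X Y : sl2C) (h00 : X.val 0 0 = Y.val 0 0) (h01 : X.val 0 1 = Y.val 0 1)
    (h10 : X.val 1 0 = Y.val 1 0) : X = Y := by
  have hX := sl2_trace X; have hY := sl2_trace Y
  apply Subtype.ext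
  ext i j
  fin_cases i <;> fin_cases j
  · exact h00
  · exact h01
  · exact h10
  · show X.val 1 1 = Y.val 1 1
    linear_combination hX - hY - h00

lemma sl2_val_smul (a : ℂ) (X : sl2C) : (a • X).val = a • X.val := rfl
lemma sl2_val_add (X Y : sl2C) : (X + Y).val = X.val + Y.val := rfl
lemma sl2_val_zero : (0 : sl2C).val = 0 := rfl
lemma sl2_bracket_val (X Y : sl2C) : (⁅X, Y⁆ : sl2C).val = X.val * Y.val - Y.val * X.val := rfl

lemma lie_sH_sE : ⁅sH, sE⁆ = (2:ℂ) • sE := by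
  apply sl2_ext <;>
    norm_num [sl2_bracket_val, sl2_val_smul, sH, sE, Ring.lie_def, Matrix.mul_apply,
      Fin.sum_univ_two]

lemma lie_sH_sF : ⁅sH, sF⁆ = (-2:ℂ) • sF := by
  apply sl2_ext <;>
    norm_num [sl2_bracket_val, sl2_val_smul, sH, sF, Ring.lie_def, Matrix.mul_apply,
      Fin.sum_univ_two]

lemma lie_sE_sF : ⁅sE, sF⁆ = sH := by
  apply sl2_ext <;>
    simp [sl2_bracket_val, sH, sE, sF, Ring.lie_def, Matrix.mul_apply, Fin.sum_univ_two]

lemma sl2_triple : IsSl2Triple sH sE sF where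
  h_ne_zero := by
    intro h
    have := congrArg (fun X : sl2C => X.val 0 0) h
    simp [sH] at this
  lie_e_f := lie_sE_sF
  lie_h_e_nsmul := by rw [lie_sH_sE, ← Nat.cast_smul_eq_nsmul ℂ]; norm_num
  lie_h_f_nsmul := by rw [lie_sH_sF, ← Nat.cast_smul_eq_nsmul ℂ]; norm_num

lemma sl2_decomp (X : sl2C) :
    X = X.val 0 0 • sH + X.val 0 1 • sE + X.val 1 0 • sF := by
  apply sl2_ext <;> simp [sl2_val_add, sl2_val_smul, sH, sE, sF]

/-- Entrywise consequences of being an `ad sH`-weight vector of weight `w`. -/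
lemma sl2_wt_entries (X : sl2C) (w : ℂ) (hw : ⁅sH, X⁆ = w • X) :
    w * X.val 0 0 = 0 ∧ (w - 2) * X.val 0 1 = 0 ∧ (w + 2) * X.val 1 0 = 0 := by
  have h00 := congrArg (fun Y : sl2C => Y.val 0 0) hw
  have h01 := congrArg (fun Y : sl2C => Y.val 0 1) hw
  have h10 := congrArg (fun Y : sl2C => Y.val 1 0) hw
  simp [sl2_bracket_val, sl2_val_smul, sH, Ring.lie_def, Matrix.sub_apply, Matrix.mul_apply,
    Matrix.vecMul, Matrix.vecHead, Matrix.vecTail, dotProduct,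
    Fin.sum_univ_two] at h00 h01 h10
  refine ⟨?_, by linear_combination -h01, by linear_combination -h10⟩
  rcases h00 with h | h <;> simp [h]

lemma sl2_zero_of_entries (X : sl2C) (h00 : X.val 0 0 = 0) (h01 : X.val 0 1 = 0)
    (h10 : X.val 1 0 = 0) : X = 0 := by
  apply sl2_ext <;> simp [sl2_val_zero, h00, h01, h10]

section Module

open LieModule

variable {V : Type*} [AddCommGroup V] [Module ℂ V]
    [LieRingModule sl2C V] [LieModule ℂ sl2C V]
    [FiniteDimensional ℂ V] [Nontrivial V]

lemma exists_prim :
    ∃ (v₀ : V) (n : ℕ), sl2_triple.HasPrimitiveVectorWith v₀ ((n : ℂ)) := by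
  obtain ⟨c, hc⟩ := Module.End.exists_eigenvalue (toEnd ℂ sl2C V sH)
  obtain ⟨w, hw⟩ := hc.exists_hasEigenvector
  have hw1 : ⁅sH, w⁆ = c • w := by
    have := hw.apply_eq_smul
    simpa [toEnd_apply_apply] using this
  set ψ : ℕ → V := fun k => ((toEnd ℂ sl2C V sE) ^ k) w with hψdef
  have hψsucc : ∀ k, ψ (k + 1) = ⁅sE, ψ k⁆ := by
    intro k
    simp only [hψdef, pow_succ', Module.End.mul_apply, toEnd_apply_apply]
  have hψH : ∀ k, ⁅sH, ψ k⁆ = (c + 2 * k) • ψ k := by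
    intro k
    induction k with
    | zero => simpa [hψdef] using hw1
    | succ k ih =>
      rw [hψsucc k, leibniz_lie, lie_sH_sE, ih]
      rw [smul_lie, lie_smul, ← add_smul]
      congr 1
      push_cast
      ring
  have hstop : ∃ k, ψ k ≠ 0 ∧ ψ (k + 1) = 0 := by
    by_contra hcon
    push_neg at hcon
    have hne : ∀ k, ψ k ≠ 0 := by
      intro k
      induction k with
      | zero => simpa [hψdef] using hw.right
      | succ k ih => exact hcon k ih
    have hli : LinearIndependent ℂ ψ := by
      apply Module.End.eigenvectors_linearIndependent' (toEnd ℂ sl2C V sH)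
        (fun k : ℕ => c + 2 * k)
      · intro j k hjk
        simp only at hjk
        have : (j : ℂ) = k := by linear_combination hjk / 2
        exact_mod_cast this
      · intro k
        refine ⟨?_, hne k⟩
        rw [Module.End.mem_eigenspace_iff, toEnd_apply_apply]
        exact hψH k
    exact Module.Finite.not_linearIndependent_of_infinite ψ hli
  obtain ⟨k, hk1, hk2⟩ := hstop
  have P : sl2_triple.HasPrimitiveVectorWith (ψ k) (c + 2 * k) :=
    { ne_zero := hk1
      lie_h := hψH k
      lie_e := by rw [← hψsucc k]; exact hk2 }
  obtain ⟨n, hn⟩ := P.exists_nat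
  exact ⟨ψ k, n, hn ▸ P⟩

end Module


/-- Let `V` be a nonzero finite-dimensional complex irreducible `sl(2,ℂ)`-module with
`dim V ≠ 3` (i.e. `V` is not the adjoint representation `D₂`).  Then every totally
symmetric trilinear map `μ : V³ → sl(2,ℂ)` which is equivariant (J3) and satisfies J4 is
identically zero.  (The nonexistence part of Theorem 3.1 for `g₁` irreducible.) -/
theorem sl2_irreducible_order3_trivial
    {V : Type*} [AddCommGroup V] [Module ℂ V]
    [LieRingModule sl2C V] [LieModule ℂ sl2C V]
    [FiniteDimensional ℂ V] [Nontrivial V]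
    (hirr : ∀ N : LieSubmodule ℂ sl2C V, N = ⊥ ∨ N = ⊤)
    (hdim : Module.finrank ℂ V ≠ 3)
    (μ : V → V → V → sl2C)
    (hadd : ∀ y y' z w, μ (y + y') z w = μ y z w + μ y' z w)
    (hsmul : ∀ (a : ℂ) (y z w), μ (a • y) z w = a • μ y z w)
    (hsymm₁ : ∀ y z w, μ y z w = μ z y w)
    (hsymm₂ : ∀ y z w, μ y z w = μ y w z)
    (hJ3 : ∀ (x : sl2C) (y₁ y₂ y₃ : V), ⁅x, μ y₁ y₂ y₃⁆ =
      μ ⁅x, y₁⁆ y₂ y₃ + μ y₁ ⁅x, y₂⁆ y₃ + μ y₁ y₂ ⁅x, y₃⁆)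
    (hJ4 : ∀ y₁ y₂ y₃ y₄ : V,
      ⁅μ y₂ y₃ y₄, y₁⁆ + ⁅μ y₁ y₃ y₄, y₂⁆ + ⁅μ y₁ y₂ y₄, y₃⁆ + ⁅μ y₁ y₂ y₃, y₄⁆ = 0) :
    ∀ y₁ y₂ y₃ : V, μ y₁ y₂ y₃ = 0 := by
  classical
  obtain ⟨v₀, n, P⟩ := exists_prim (V := V)
  let v : ℕ → V := fun k => ((LieModule.toEnd ℂ sl2C V sF) ^ k) v₀
  have hHv : ∀ k : ℕ, ⁅sH, v k⁆ = ((n : ℂ) - 2 * k) • v k := fun k => P.lie_h_pow_toEnd_f k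
  have hFv : ∀ k : ℕ, ⁅sF, v k⁆ = v (k + 1) := fun k => P.lie_f_pow_toEnd_f k
  have hEv : ∀ k : ℕ, ⁅sE, v (k + 1)⁆ = (((k : ℂ) + 1) * ((n : ℂ) - k)) • v k :=
    fun k => P.lie_e_pow_succ_toEnd_f k
  have hv00 : v 0 = v₀ := by simp [v]
  have hEv0 : ⁅sE, v 0⁆ = 0 := by rw [hv00]; exact P.lie_e
  have hvne : ∀ k : ℕ, k ≤ n → v k ≠ 0 := fun k hk =>
    P.pow_toEnd_f_ne_zero_of_eq_nat rfl hk
  have hvz : ∀ k : ℕ, n < k → v k = 0 := by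
    have h1 : v (n + 1) = 0 := P.pow_toEnd_f_eq_zero_of_eq_nat rfl
    intro k hk
    obtain ⟨j, rfl⟩ : ∃ j, k = (n + 1) + j := ⟨k - (n + 1), by omega⟩
    have : v ((n + 1) + j) = ((LieModule.toEnd ℂ sl2C V sF) ^ j) (v (n + 1)) := by
      show ((LieModule.toEnd ℂ sl2C V sF) ^ ((n+1)+j)) v₀ = _
      rw [add_comm, pow_add]
      rfl
    rw [this, h1, map_zero]
  -- linearity helpers
  have hzero₁ : ∀ z w : V, μ 0 z w = 0 := by
    intro z w
    have := hsmul 0 0 z w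
    simpa using this
  have hzero₂ : ∀ y w : V, μ y 0 w = 0 := fun y w => by
    rw [hsymm₁ y 0 w]; exact hzero₁ y w
  have hzero₃ : ∀ y z : V, μ y z 0 = 0 := fun y z => by
    rw [hsymm₂ y z 0]; exact hzero₂ y z
  have hadd₂ : ∀ y z z' w : V, μ y (z + z') w = μ y z w + μ y z' w := fun y z z' w => by
    rw [hsymm₁ y (z + z') w, hadd, hsymm₁ z y w, hsymm₁ z' y w]
  have hsmul₂ : ∀ (t : ℂ) (y z w : V), μ y (t • z) w = t • μ y z w := fun t y z w => by
    rw [hsymm₁ y (t • z) w, hsmul, hsymm₁ z y w]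
  have hadd₃ : ∀ y z w w' : V, μ y z (w + w') = μ y z w + μ y z w' := fun y z w w' => by
    rw [hsymm₂ y z (w + w'), hadd₂ y w w' z, hsymm₂ y w z, hsymm₂ y w' z]
  have hsmul₃ : ∀ (t : ℂ) (y z w : V), μ y z (t • w) = t • μ y z w := fun t y z w => by
    rw [hsymm₂ y z (t • w), hsmul₂, hsymm₂ y w z]
  -- the span of the v k is everything
  set SS : Submodule ℂ V := Submodule.span ℂ (Set.range v) with hSSdef
  have hmemS : ∀ k, v k ∈ SS := fun k => Submodule.subset_span ⟨k, rfl⟩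
  have hlie_gen : ∀ (x : sl2C) (k : ℕ), ⁅x, v k⁆ ∈ SS := by
    intro x k
    rw [sl2_decomp x, add_lie, add_lie, smul_lie, smul_lie, smul_lie]
    refine SS.add_mem (SS.add_mem (SS.smul_mem _ ?_) (SS.smul_mem _ ?_)) (SS.smul_mem _ ?_)
    · rw [hHv k]; exact SS.smul_mem _ (hmemS k)
    · cases k with
      | zero => rw [hEv0]; exact SS.zero_mem
      | succ k => rw [hEv k]; exact SS.smul_mem _ (hmemS k)
    · rw [hFv k]; exact hmemS (k + 1)
  have hlie : ∀ (x : sl2C) (z : V), z ∈ SS → ⁅x, z⁆ ∈ SS := by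
    intro x z hz
    induction hz using Submodule.span_induction with
    | mem u hu => obtain ⟨k, rfl⟩ := hu; exact hlie_gen x k
    | zero => rw [lie_zero]; exact SS.zero_mem
    | add a b _ _ ha hb => rw [lie_add]; exact SS.add_mem ha hb
    | smul a u _ hu => rw [lie_smul]; exact SS.smul_mem a hu
  have hspan : ∀ z : V, z ∈ SS := by
    let NL : LieSubmodule ℂ sl2C V := { SS with lie_mem := fun {x} {z} hz => hlie x z hz }
    have hNL : NL = ⊤ := by
      rcases hirr NL with h | h
      · exfalso
        have h0 : v 0 ∈ NL := hmemS 0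
        rw [h] at h0
        exact hvne 0 (Nat.zero_le n) (by simpa using h0)
      · exact h
    intro z
    have : z ∈ NL := by rw [hNL]; exact LieSubmodule.mem_top _
    exact this
  -- basis extension principles
  have hext : ∀ y z : V, (∀ k, μ y z (v k) = 0) → ∀ w, μ y z w = 0 := by
    intro y z h w
    let L : V →ₗ[ℂ] sl2C :=
      { toFun := fun u => μ y z u
        map_add' := fun a b => hadd₃ y z a b
        map_smul' := fun t u => hsmul₃ t y z u }
    have hker : SS ≤ LinearMap.ker L := by
      rw [hSSdef, Submodule.span_le]
      rintro u ⟨k, rfl⟩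
      exact LinearMap.mem_ker.mpr (h k)
    exact LinearMap.mem_ker.mp (hker (hspan w))
  have hext₂ : ∀ y : V, (∀ b w, μ y (v b) w = 0) → ∀ z w, μ y z w = 0 := by
    intro y h z w
    let L : V →ₗ[ℂ] sl2C :=
      { toFun := fun u => μ y u w
        map_add' := fun a b => hadd₂ y a b w
        map_smul' := fun t u => hsmul₂ t y u w }
    have hker : SS ≤ LinearMap.ker L := by
      rw [hSSdef, Submodule.span_le]
      rintro u ⟨k, rfl⟩
      exact LinearMap.mem_ker.mpr (h k w)
    exact LinearMap.mem_ker.mp (hker (hspan z))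
  -- finrank V = n + 1, hence n ≠ 2
  have hli : LinearIndependent ℂ (fun i : Fin (n + 1) => v i) := by
    apply Module.End.eigenvectors_linearIndependent' (LieModule.toEnd ℂ sl2C V sH)
      (fun i : Fin (n + 1) => (n : ℂ) - 2 * (i : ℕ))
    · intro i j hij
      simp only at hij
      have h1 : ((i : ℕ) : ℂ) = ((j : ℕ) : ℂ) := by linear_combination -hij / 2
      have h2 : (i : ℕ) = (j : ℕ) := by exact_mod_cast h1
      exact Fin.ext h2
    · intro i
      refine ⟨?_, hvne i (Nat.lt_succ_iff.mp i.isLt)⟩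
      rw [Module.End.mem_eigenspace_iff, LieModule.toEnd_apply_apply]
      exact hHv i
  have hn2 : n ≠ 2 := by
    intro hn
    apply hdim
    have hsp : ⊤ ≤ Submodule.span ℂ (Set.range fun i : Fin (n + 1) => v i) := by
      intro z _
      have hz := hspan z
      rw [hSSdef] at hz
      refine Submodule.span_le.mpr ?_ hz
      rintro u ⟨k, rfl⟩
      by_cases hk : k ≤ n
      · exact Submodule.subset_span ⟨⟨k, by omega⟩, rfl⟩
      · rw [hvz k (by omega)]; exact Submodule.zero_mem _
    have hfr : Module.finrank ℂ V = n + 1 := by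
      rw [Module.finrank_eq_card_basis (Module.Basis.mk hli hsp), Fintype.card_fin]
    rw [hfr, hn]
  -- pairwise independence
  have hpair : ∀ j k : ℕ, j < k → k ≤ n → ∀ α β : ℂ, α • v j + β • v k = 0 →
      α = 0 ∧ β = 0 := by
    intro j k hjk hk α β hrel
    have h2 : α • ⁅sH, v j⁆ + β • ⁅sH, v k⁆ = 0 := by
      rw [← lie_smul, ← lie_smul, ← lie_add, hrel, lie_zero]
    rw [hHv j, hHv k] at h2
    have h4 : (β * (2 * (j : ℂ) - 2 * k)) • v k = 0 := by
      have e : (β * (2 * (j : ℂ) - 2 * k)) • v k =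
          (α • (((n : ℂ) - 2 * j) • v j) + β • (((n : ℂ) - 2 * k) • v k))
            - ((n : ℂ) - 2 * j) • (α • v j + β • v k) := by
        module
      rw [e, h2, hrel, smul_zero, sub_zero]
    have hβ : β = 0 := by
      have hcoef : (2 * (j : ℂ) - 2 * k) ≠ 0 := by
        intro h
        have h1 : ((j : ℕ) : ℂ) = ((k : ℕ) : ℂ) := by linear_combination h / 2
        have : j = k := by exact_mod_cast h1
        omega
      rcases smul_eq_zero.mp h4 with h | h
      · rcases mul_eq_zero.mp h with h | h
        · exact h
        · exact absurd h hcoef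
      · exact absurd h (hvne k hk)
    refine ⟨?_, hβ⟩
    have hα : α • v j = 0 := by
      rw [hβ] at hrel
      simpa using hrel
    rcases smul_eq_zero.mp hα with h | h
    · exact h
    · exact absurd h (hvne j (by omega))
  -- weights of μ-values
  have hWt : ∀ a b c : ℕ, ⁅sH, μ (v a) (v b) (v c)⁆ =
      (3 * (n : ℂ) - 2 * ((a : ℂ) + b + c)) • μ (v a) (v b) (v c) := by
    intro a b c
    rw [hJ3 sH (v a) (v b) (v c), hHv a, hHv b, hHv c, hsmul, hsmul₂, hsmul₃,
      ← add_smul, ← add_smul]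
    congr 1
    ring
  have hWv : ∀ a b c : ℕ, 3 * (n : ℤ) - 2 * ((a : ℤ) + b + c) ≠ 0 →
      3 * (n : ℤ) - 2 * ((a : ℤ) + b + c) ≠ 2 →
      3 * (n : ℤ) - 2 * ((a : ℤ) + b + c) ≠ -2 → μ (v a) (v b) (v c) = 0 := by
    intro a b c h0 h2 hm2
    obtain ⟨e00, e01, e10⟩ := sl2_wt_entries _ _ (hWt a b c)
    have c0 : (3 * (n : ℂ) - 2 * ((a : ℂ) + b + c)) ≠ 0 := by
      intro h
      apply h0
      have h' : ((3 * (n : ℤ) - 2 * ((a : ℤ) + b + c) : ℤ) : ℂ) = 0 := by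
        push_cast
        linear_combination h
      exact_mod_cast h'
    have c2 : (3 * (n : ℂ) - 2 * ((a : ℂ) + b + c)) - 2 ≠ 0 := by
      intro h
      apply h2
      have h' : ((3 * (n : ℤ) - 2 * ((a : ℤ) + b + c) : ℤ) : ℂ) = 2 := by
        push_cast
        linear_combination h
      exact_mod_cast h'
    have cm2 : (3 * (n : ℂ) - 2 * ((a : ℂ) + b + c)) + 2 ≠ 0 := by
      intro h
      apply hm2
      have h' : ((3 * (n : ℤ) - 2 * ((a : ℤ) + b + c) : ℤ) : ℂ) = -2 := by
        push_cast
        linear_combination h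
      exact_mod_cast h'
    exact sl2_zero_of_entries _ ((mul_eq_zero.mp e00).resolve_left c0)
      ((mul_eq_zero.mp e01).resolve_left c2) ((mul_eq_zero.mp e10).resolve_left cm2)
  -- THE KEY CLAIM: μ (v 0) (v b) (v c) = 0 for all b c
  have hbase : ∀ b c : ℕ, μ (v 0) (v b) (v c) = 0 := by
    rcases Nat.even_or_odd n with he | ho
    case inr =>
      -- n odd
      intro b c
      obtain ⟨t, ht⟩ := ho
      exact hWv 0 b c (by omega) (by omega) (by omega)
    obtain ⟨m, hm⟩ := he
    rcases Nat.lt_or_ge n 4 with hlt | hge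
    · -- n = 0
      have hn0 : n = 0 := by omega
      intro b c
      rcases Nat.eq_zero_or_pos (b + c) with hbc | hbc
      · obtain ⟨hb0, hc0⟩ : b = 0 ∧ c = 0 := by omega
        subst hb0; subst hc0
        obtain ⟨e00, e01, e10⟩ := sl2_wt_entries _ _ (hWt 0 0 0)
        have c2 : (3 * (n : ℂ) - 2 * (((0:ℕ) : ℂ) + (0:ℕ) + (0:ℕ))) - 2 ≠ 0 := by
          rw [hn0]; norm_num
        have cm2 : (3 * (n : ℂ) - 2 * (((0:ℕ) : ℂ) + (0:ℕ) + (0:ℕ))) + 2 ≠ 0 := by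
          rw [hn0]; norm_num
        have h01 : (μ (v 0) (v 0) (v 0)).val 0 1 = 0 := (mul_eq_zero.mp e01).resolve_left c2
        have h10 : (μ (v 0) (v 0) (v 0)).val 1 0 = 0 := (mul_eq_zero.mp e10).resolve_left cm2
        have hE3 := hJ3 sE (v 0) (v 0) (v 0)
        rw [hEv0, hzero₁, hzero₂, hzero₃, add_zero, add_zero] at hE3
        have h00' := congrArg (fun Y : sl2C => Y.val 0 1) hE3
        have htr := sl2_trace (μ (v 0) (v 0) (v 0))
        simp [sl2_bracket_val, sE, Ring.lie_def, Matrix.sub_apply, Matrix.mul_apply,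
          Fin.sum_univ_two, Matrix.vecMul, Matrix.vecHead, Matrix.vecTail,
          dotProduct] at h00'
        refine sl2_zero_of_entries _ ?_ h01 h10
        linear_combination (htr - h00') / 2
      · rcases Nat.eq_zero_or_pos b with hb | hb
        · rw [hvz c (by omega)]; exact hzero₃ _ _
        · rw [hvz b (by omega)]; exact hzero₂ _ _
    · -- n even, n ≥ 4 : n = 2 m with m ≥ 2
      obtain ⟨p, hp⟩ : ∃ p, m = p + 1 := ⟨m - 1, by omega⟩
      have step1 : ∀ w, μ (v 0) (v 0) w = 0 := by
        apply hext
        intro c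
        by_cases hc : c ≤ n
        · exact hWv 0 0 c (by omega) (by omega) (by omega)
        · rw [hvz c (by omega)]; exact hzero₃ _ _
      have step1' : ∀ w, μ (v n) (v n) w = 0 := by
        apply hext
        intro c
        exact hWv n n c (by omega) (by omega) (by omega)
      have step2 : ∀ z w, ⁅μ (v 0) z w, v 0⁆ = 0 := by
        intro z w
        have h4 := hJ4 z w (v 0) (v 0)
        have hwv : μ w (v 0) (v 0) = 0 := by
          rw [hsymm₁ w (v 0) (v 0), hsymm₂ (v 0) w (v 0)]; exact step1 w
        have hzv : μ z (v 0) (v 0) = 0 := by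
          rw [hsymm₁ z (v 0) (v 0), hsymm₂ (v 0) z (v 0)]; exact step1 z
        rw [hwv, hzv, zero_lie, zero_lie, zero_add, zero_add] at h4
        have hsw : μ z w (v 0) = μ (v 0) z w := by
          rw [hsymm₂ z w (v 0), hsymm₁ z (v 0) w]
        rw [hsw] at h4
        have h2 : (2 : ℂ) • ⁅μ (v 0) z w, v 0⁆ = 0 := by rw [two_smul]; exact h4
        exact (smul_eq_zero.mp h2).resolve_left two_ne_zero
      have step2' : ∀ z w, ⁅μ (v n) z w, v n⁆ = 0 := by
        intro z w
        have h4 := hJ4 z w (v n) (v n)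
        have hwv : μ w (v n) (v n) = 0 := by
          rw [hsymm₁ w (v n) (v n), hsymm₂ (v n) w (v n)]; exact step1' w
        have hzv : μ z (v n) (v n) = 0 := by
          rw [hsymm₁ z (v n) (v n), hsymm₂ (v n) z (v n)]; exact step1' z
        rw [hwv, hzv, zero_lie, zero_lie, zero_add, zero_add] at h4
        have hsw : μ z w (v n) = μ (v n) z w := by
          rw [hsymm₂ z w (v n), hsymm₁ z (v n) w]
        rw [hsw] at h4
        have h2 : (2 : ℂ) • ⁅μ (v n) z w, v n⁆ = 0 := by rw [two_smul]; exact h4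
        exact (smul_eq_zero.mp h2).resolve_left two_ne_zero
      have step3 : ∀ X : sl2C, ⁅X, v 0⁆ = 0 → X.val 0 0 = 0 ∧ X.val 1 0 = 0 := by
        intro X hX
        have hbr : ⁅X, v 0⁆ = (X.val 0 0 * (n : ℂ)) • v 0 + X.val 1 0 • v 1 := by
          conv_lhs => rw [sl2_decomp X]
          rw [add_lie, add_lie, smul_lie, smul_lie, smul_lie, hHv 0, hEv0, hFv 0,
            smul_zero, add_zero, smul_smul]
          norm_num
        rw [hbr] at hX
        obtain ⟨h1, h2⟩ := hpair 0 1 (by omega) (by omega) _ _ hX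
        have hN : (n : ℂ) ≠ 0 := Nat.cast_ne_zero.mpr (by omega)
        refine ⟨?_, h2⟩
        rcases mul_eq_zero.mp h1 with h | h
        · exact h
        · exact absurd h hN
      have step4 : ∀ X : sl2C, ⁅X, v n⁆ = 0 → X.val 0 0 = 0 ∧ X.val 0 1 = 0 := by
        intro X hX
        obtain ⟨q, hq⟩ : ∃ q, n = q + 1 := ⟨n - 1, by omega⟩
        have hEn : ⁅sE, v n⁆ = (((q : ℂ) + 1) * ((n : ℂ) - q)) • v q := by
          have h := hEv q
          rw [← hq] at h
          exact h
        have hbr : ⁅X, v n⁆ = (X.val 0 1 * (((q : ℂ) + 1) * ((n : ℂ) - q))) • v q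
            + (X.val 0 0 * ((n : ℂ) - 2 * n)) • v n := by
          conv_lhs => rw [sl2_decomp X]
          rw [add_lie, add_lie, smul_lie, smul_lie, smul_lie, hHv n, hEn, hFv n,
            hvz (n + 1) (by omega), smul_zero, add_zero, smul_smul, smul_smul]
          rw [add_comm]
        rw [hbr] at hX
        obtain ⟨h1, h2⟩ := hpair q n (by omega) le_rfl _ _ hX
        have hN : (n : ℂ) ≠ 0 := Nat.cast_ne_zero.mpr (by omega)
        constructor
        · rcases mul_eq_zero.mp h2 with h | h
          · exact h
          · exfalso
            apply hN
            have hq' : ((q : ℕ) : ℂ) = (n : ℂ) - 1 := by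
              rw [hq]; push_cast; ring
            linear_combination -h
        · rcases mul_eq_zero.mp h1 with h | h
          · exact h
          · exfalso
            have hq' : ((n : ℂ) - q) = 1 := by rw [hq]; push_cast; ring
            rw [hq'] at h
            have : ((q : ℂ) + 1) = 0 := by linear_combination h
            exact Nat.cast_add_one_ne_zero q this
      have Wzero : ∀ b c : ℕ, b + c + 1 ≠ 3 * m → μ (v 0) (v b) (v c) = 0 := by
        intro b c hbc
        obtain ⟨h00, h10⟩ := step3 _ (step2 (v b) (v c))
        obtain ⟨e00, e01, e10⟩ := sl2_wt_entries _ _ (hWt 0 b c)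
        refine sl2_zero_of_entries _ h00 ?_ h10
        have hne : (3 * (n : ℂ) - 2 * (((0:ℕ) : ℂ) + b + c)) - 2 ≠ 0 := by
          intro h
          have h' : ((3 * (n : ℤ) - 2 * (((0:ℕ) : ℤ) + b + c) - 2 : ℤ) : ℂ) = 0 := by
            push_cast
            linear_combination h
          have h'' : (3 * (n : ℤ) - 2 * (((0:ℕ) : ℤ) + b + c) - 2 : ℤ) = 0 := by
            exact_mod_cast h'
          omega
        exact (mul_eq_zero.mp e01).resolve_left hne
      have chain : ∀ j i : ℕ, i + j = m + 1 → μ (v 0) (v (p + j)) (v (p + i)) = 0 := by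
        intro j
        induction j with
        | zero =>
          intro i hi
          have hi' : i = m + 1 := by omega
          subst hi'
          have hpn : p + (m + 1) = n := by omega
          rw [Nat.add_zero, hpn]
          obtain ⟨h00, h10⟩ := step3 _ (step2 (v p) (v n))
          have hY : μ (v 0) (v p) (v n) = μ (v n) (v 0) (v p) := by
            rw [hsymm₂ (v 0) (v p) (v n), hsymm₁ (v 0) (v n) (v p)]
          obtain ⟨h00', h01⟩ := step4 (μ (v 0) (v p) (v n)) (by rw [hY]; exact step2' _ _)
          exact sl2_zero_of_entries _ h00 h01 h10
        | succ j IH =>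
          intro i hij
          have hrw : p + (j + 1) = p + j + 1 := by omega
          rw [hrw]
          have hIH : μ (v 0) (v (p + j)) (v (p + i + 1)) = 0 := by
            rw [Nat.add_assoc p i 1]
            exact IH (i + 1) (by omega)
          have h3 := hJ3 sE (v 0) (v (p + j + 1)) (v (p + i + 1))
          rw [hEv0, hzero₁, hEv (p + j), hEv (p + i), hsmul₂, hsmul₃] at h3
          have hz : μ (v 0) (v (p + j + 1)) (v (p + i + 1)) = 0 := Wzero _ _ (by omega)
          rw [hz, lie_zero, hIH, smul_zero, zero_add, zero_add] at h3
          have hcoef : (((p + i : ℕ) : ℂ) + 1) * ((n : ℂ) - ((p + i : ℕ) : ℂ)) ≠ 0 := by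
            apply mul_ne_zero
            · exact Nat.cast_add_one_ne_zero (p + i)
            · intro h
              have h' : (((n : ℤ) - ((p + i : ℕ) : ℤ) : ℤ) : ℂ) = 0 := by
                push_cast at h ⊢
                linear_combination h
              have h'' : ((n : ℤ) - ((p + i : ℕ) : ℤ) : ℤ) = 0 := by exact_mod_cast h'
              omega
          rcases smul_eq_zero.mp h3.symm with h | h
          · exact absurd h hcoef
          · exact h
      intro b c
      by_cases hbc : b + c + 1 = 3 * m
      · by_cases hb : b ≤ n
        · by_cases hc : c ≤ n
          · obtain ⟨j, rfl⟩ := Nat.exists_eq_add_of_le (show p ≤ b by omega)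
            obtain ⟨i, rfl⟩ := Nat.exists_eq_add_of_le (show p ≤ c by omega)
            exact chain j i (by omega)
          · rw [hvz c (by omega)]; exact hzero₃ _ _
        · rw [hvz b (by omega)]; exact hzero₂ _ _
      · exact Wzero b c hbc
  -- conclude: v 0 is in the "radical" of μ, which is a Lie submodule
  have hv0N : ∀ z w : V, μ (v 0) z w = 0 :=
    hext₂ (v 0) (fun b w => hext (v 0) (v b) (fun c => hbase b c) w)
  let NS : Submodule ℂ V :=
    { carrier := {y | ∀ z w, μ y z w = 0}
      zero_mem' := fun z w => hzero₁ z w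
      add_mem' := by
        intro a b ha hb z w
        rw [hadd, ha z w, hb z w, add_zero]
      smul_mem' := by
        intro t y hy z w
        rw [hsmul, hy z w, smul_zero] }
  let NL2 : LieSubmodule ℂ sl2C V :=
    { NS with
      lie_mem := by
        intro x y hy
        intro z w
        have h3 := hJ3 x y z w
        have hE : μ ⁅x, y⁆ z w = ⁅x, μ y z w⁆ - μ y ⁅x, z⁆ w - μ y z ⁅x, w⁆ := by
          rw [h3]; abel
        rw [hE, hy z w, hy ⁅x, z⁆ w, hy z ⁅x, w⁆, lie_zero, sub_zero, sub_zero] }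
  have hNL2 : NL2 = ⊤ := by
    rcases hirr NL2 with h | h
    · exfalso
      have h0 : v 0 ∈ NL2 := hv0N
      rw [h] at h0
      exact hvne 0 (Nat.zero_le n) (by simpa using h0)
    · exact h
  intro y₁ y₂ y₃
  have hy : y₁ ∈ NL2 := by rw [hNL2]; exact LieSubmodule.mem_top _
  exact hy y₂ y₃
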